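/- Let ω : 𝒳 → ℝ be measurable with ω ≥ 0, and let G̃ be a σ(V)-measurable real random variable satisfying G̃·E[ω(X) | σ(V)] = E[ω(X)·(Y¹−Y⁰) | σ(V)] almost surely (the weighted conditional treatment effect E{ω(X)(Y¹−Y⁰)|V}/E{ω(X)|V}). Then for every measurable g : 𝒱 → ℝ (with all expectations below finite), E[ω(X)·((Y¹−Y⁰) − g(V))²] = E[ω(X)·((Y¹−Y⁰) − G̃)²] + E[E[ω(X) | σ(V)]·(G̃ − g(V))²]; in particular G̃ minimizes the ω-weighted population risk g ↦ E[ω(X)·((Y¹−Y⁰) − g(V))²]. -/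

import Mathlib

open MeasureTheory ProbabilityTheory

/-- for a nonnegative weight `ω(X)`, the weighted conditional treatment effect
`G̃` (characterized by `G̃·E[ω(X)|σ(V)] = E[ω(X)(Y¹−Y⁰)|σ(V)]` a.s.) decomposes the
`ω`-weighted risk and hence minimizes it. -/
theorem stmt4 {Ω 𝓧 𝓥 : Type*} [MeasurableSpace Ω] [MeasurableSpace 𝓧] [MeasurableSpace 𝓥]
    (P : Measure Ω) [IsProbabilityMeasure P]
    (X : Ω → 𝓧) (hX : Measurable X) (v : 𝓧 → 𝓥) (hv : Measurable v)
    (Y0 Y1 : Ω → ℝ) (hY0 : Measurable Y0) (hY1 : Measurable Y1)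
    (wt : 𝓧 → ℝ) (hwt : Measurable wt) (hwtnn : ∀ x, 0 ≤ wt x)
    (G : Ω → ℝ)
    (hGmeas : Measurable[MeasurableSpace.comap (fun ω => v (X ω)) inferInstance] G)
    (hG : (fun ω => G ω *
        (P[fun ω' => wt (X ω') | MeasurableSpace.comap (fun ω' => v (X ω')) inferInstance]) ω)
      =ᵐ[P]
      P[fun ω' => wt (X ω') * (Y1 ω' - Y0 ω') |
        MeasurableSpace.comap (fun ω' => v (X ω')) inferInstance])
    (hIw : Integrable (fun ω => wt (X ω)) P)
    (hIwY : Integrable (fun ω => wt (X ω) * (Y1 ω - Y0 ω)) P)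
    (g : 𝓥 → ℝ) (hg : Measurable g)
    (hI1 : Integrable (fun ω => wt (X ω) * ((Y1 ω - Y0 ω) - g (v (X ω))) ^ 2) P)
    (hI2 : Integrable (fun ω => wt (X ω) * ((Y1 ω - Y0 ω) - G ω) ^ 2) P)
    (hI3 : Integrable (fun ω =>
      (P[fun ω' => wt (X ω') | MeasurableSpace.comap (fun ω' => v (X ω')) inferInstance]) ω
        * (G ω - g (v (X ω))) ^ 2) P)
    (hI4 : Integrable (fun ω => wt (X ω) * ((Y1 ω - Y0 ω) - G ω) * (G ω - g (v (X ω)))) P) :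
    (∫ ω, wt (X ω) * ((Y1 ω - Y0 ω) - g (v (X ω))) ^ 2 ∂P
      = ∫ ω, wt (X ω) * ((Y1 ω - Y0 ω) - G ω) ^ 2 ∂P
        + ∫ ω,
            (P[fun ω' => wt (X ω') |
              MeasurableSpace.comap (fun ω' => v (X ω')) inferInstance]) ω
              * (G ω - g (v (X ω))) ^ 2 ∂P)
    ∧ ∫ ω, wt (X ω) * ((Y1 ω - Y0 ω) - G ω) ^ 2 ∂P
        ≤ ∫ ω, wt (X ω) * ((Y1 ω - Y0 ω) - g (v (X ω))) ^ 2 ∂P := by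
  have hVmeas : Measurable (fun ω => v (X ω)) := hv.comp hX
  have hm : (MeasurableSpace.comap (fun ω => v (X ω)) inferInstance : MeasurableSpace Ω) ≤ ‹MeasurableSpace Ω› := hVmeas.comap_le
  haveI : SigmaFinite (P.trim hm) := (isFiniteMeasure_trim hm).toSigmaFinite
  set Δ : Ω → ℝ := fun ω => Y1 ω - Y0 ω with hΔ_def
  set W : Ω → ℝ := fun ω => wt (X ω) with hW_def
  set f : Ω → ℝ := fun ω => G ω - g (v (X ω)) with hf_def
  have hgV : Measurable[(MeasurableSpace.comap (fun ω => v (X ω)) inferInstance : MeasurableSpace Ω)] (fun ω => g (v (X ω))) := by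
    have : Measurable[(MeasurableSpace.comap (fun ω => v (X ω)) inferInstance : MeasurableSpace Ω)] (fun ω => v (X ω)) := Measurable.of_comap_le le_rfl
    exact hg.comp this
  have hfm : StronglyMeasurable[(MeasurableSpace.comap (fun ω => v (X ω)) inferInstance : MeasurableSpace Ω)] f := (hGmeas.sub hgV).stronglyMeasurable
  have habs : ∀ t : ℝ, |t| ≤ (1 + t ^ 2) / 2 := by
    intro t
    nlinarith [sq_nonneg (|t| - 1), sq_abs t, abs_nonneg t]
  -- Integrability of W * (Δ - G)
  have hIWG' : Integrable (fun ω => W ω * (Δ ω - G ω)) P := by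
    have hB : Integrable (fun ω => (W ω + W ω * (Δ ω - G ω) ^ 2) / 2) P := by
      exact (hIw.add hI2).div_const 2
    refine Integrable.mono' hB ?_ ?_
    · have h1 : AEStronglyMeasurable W P := hIw.1
      have h2 : AEStronglyMeasurable (fun ω => Δ ω - G ω) P := by
        have hGm : Measurable G := hGmeas.mono hm le_rfl
        exact ((hY1.sub hY0).sub hGm).aestronglyMeasurable
      exact h1.mul h2
    · refine Filter.Eventually.of_forall fun ω => ?_
      have hw0 : 0 ≤ W ω := hwtnn _
      have h := mul_le_mul_of_nonneg_left (habs (Δ ω - G ω)) hw0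
      have habs' : |W ω * (Δ ω - G ω)| = W ω * |Δ ω - G ω| := by
        rw [abs_mul, abs_of_nonneg hw0]
      rw [Real.norm_eq_abs, habs']
      nlinarith
  -- Integrability of W * G
  have hIWG : Integrable (fun ω => G ω * W ω) P := by
    refine (hIwY.sub hIWG').congr (Filter.Eventually.of_forall fun ω => ?_)
    simp only [Pi.sub_apply, hW_def, hΔ_def]; ring
  -- E[W * (Δ - G) | m] = 0 a.e.
  have hcondWG : P[fun ω => G ω * W ω | (MeasurableSpace.comap (fun ω => v (X ω)) inferInstance : MeasurableSpace Ω)] =ᵐ[P] fun ω => G ω * (P[W | (MeasurableSpace.comap (fun ω => v (X ω)) inferInstance : MeasurableSpace Ω)]) ω := by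
    have := condExp_mul_of_stronglyMeasurable_left (μ := P) (m := (MeasurableSpace.comap (fun ω => v (X ω)) inferInstance : MeasurableSpace Ω))
      hGmeas.stronglyMeasurable hIWG hIw
    exact this
  have hcond0 : P[fun ω => W ω * (Δ ω - G ω) | (MeasurableSpace.comap (fun ω => v (X ω)) inferInstance : MeasurableSpace Ω)] =ᵐ[P] 0 := by
    have hsub : P[fun ω => W ω * (Δ ω - G ω) | (MeasurableSpace.comap (fun ω => v (X ω)) inferInstance : MeasurableSpace Ω)]
        =ᵐ[P] P[fun ω => W ω * Δ ω | (MeasurableSpace.comap (fun ω => v (X ω)) inferInstance : MeasurableSpace Ω)] - P[fun ω => G ω * W ω | (MeasurableSpace.comap (fun ω => v (X ω)) inferInstance : MeasurableSpace Ω)] := by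
      have heq : (fun ω => W ω * (Δ ω - G ω))
          = fun ω => (fun ω' => W ω' * Δ ω') ω - (fun ω' => G ω' * W ω') ω := by
        funext ω; ring
      rw [heq]
      exact condExp_sub hIwY hIWG _
    filter_upwards [hsub, hcondWG, hG] with ω h1 h2 h3
    have hr : (P[fun ω' => wt (X ω') * (Y1 ω' - Y0 ω') | (MeasurableSpace.comap (fun ω => v (X ω)) inferInstance : MeasurableSpace Ω)]) ω
        = (P[fun ω => W ω * Δ ω | (MeasurableSpace.comap (fun ω => v (X ω)) inferInstance : MeasurableSpace Ω)]) ω := rfl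
    simp only [h1, Pi.sub_apply, h2, Pi.zero_apply]
    rw [← hr, ← h3]
    exact sub_self _
  -- cross term is zero
  have hIcross : Integrable (fun ω => f ω * (W ω * (Δ ω - G ω))) P := by
    refine hI4.congr (Filter.Eventually.of_forall fun ω => ?_)
    simp only [hf_def, hW_def, hΔ_def]; ring
  have hcross : ∫ ω, f ω * (W ω * (Δ ω - G ω)) ∂P = 0 := by
    have h1 : ∫ ω, f ω * (W ω * (Δ ω - G ω)) ∂P
        = ∫ ω, (P[fun ω => f ω * (W ω * (Δ ω - G ω)) | (MeasurableSpace.comap (fun ω => v (X ω)) inferInstance : MeasurableSpace Ω)]) ω ∂P :=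
      (integral_condExp hm).symm
    have h2 : P[fun ω => f ω * (W ω * (Δ ω - G ω)) | (MeasurableSpace.comap (fun ω => v (X ω)) inferInstance : MeasurableSpace Ω)]
        =ᵐ[P] fun ω => f ω * (P[fun ω => W ω * (Δ ω - G ω) | (MeasurableSpace.comap (fun ω => v (X ω)) inferInstance : MeasurableSpace Ω)]) ω := by
      have := condExp_mul_of_stronglyMeasurable_left (μ := P) (m := (MeasurableSpace.comap (fun ω => v (X ω)) inferInstance : MeasurableSpace Ω)) hfm
        hIcross hIWG'
      exact this
    rw [h1, integral_congr_ae h2]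
    have h3 : (fun ω => f ω * (P[fun ω => W ω * (Δ ω - G ω) | (MeasurableSpace.comap (fun ω => v (X ω)) inferInstance : MeasurableSpace Ω)]) ω) =ᵐ[P] 0 := by
      filter_upwards [hcond0] with ω h
      simp [h]
    rw [integral_congr_ae h3]
    simp
  -- Integrability of f^2 * W
  have hIWf2 : Integrable (fun ω => f ω ^ 2 * W ω) P := by
    refine ((hI1.sub hI2).sub (hI4.const_mul 2)).congr
      (Filter.Eventually.of_forall fun ω => ?_)
    simp only [Pi.sub_apply, hf_def, hW_def, hΔ_def]; ring
  have hstep3 : ∫ ω, f ω ^ 2 * W ω ∂P = ∫ ω, (P[W | (MeasurableSpace.comap (fun ω => v (X ω)) inferInstance : MeasurableSpace Ω)]) ω * f ω ^ 2 ∂P := by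
    have h1 : ∫ ω, f ω ^ 2 * W ω ∂P
        = ∫ ω, (P[fun ω => f ω ^ 2 * W ω | (MeasurableSpace.comap (fun ω => v (X ω)) inferInstance : MeasurableSpace Ω)]) ω ∂P :=
      (integral_condExp hm).symm
    have h2 : P[fun ω => f ω ^ 2 * W ω | (MeasurableSpace.comap (fun ω => v (X ω)) inferInstance : MeasurableSpace Ω)]
        =ᵐ[P] fun ω => f ω ^ 2 * (P[W | (MeasurableSpace.comap (fun ω => v (X ω)) inferInstance : MeasurableSpace Ω)]) ω := by
      have := condExp_mul_of_stronglyMeasurable_left (μ := P) (m := (MeasurableSpace.comap (fun ω => v (X ω)) inferInstance : MeasurableSpace Ω)) (hfm.pow 2)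
        hIWf2 hIw
      exact this
    rw [h1, integral_congr_ae h2]
    exact integral_congr_ae (Filter.Eventually.of_forall fun ω => by ring)
  have hdecomp : ∫ ω, wt (X ω) * ((Y1 ω - Y0 ω) - g (v (X ω))) ^ 2 ∂P
      = ∫ ω, wt (X ω) * ((Y1 ω - Y0 ω) - G ω) ^ 2 ∂P
        + ∫ ω, (P[fun ω' => wt (X ω') | (MeasurableSpace.comap (fun ω => v (X ω)) inferInstance : MeasurableSpace Ω)]) ω * (G ω - g (v (X ω))) ^ 2 ∂P := by
    have hpt : (fun ω => wt (X ω) * ((Y1 ω - Y0 ω) - g (v (X ω))) ^ 2)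
        = fun ω => wt (X ω) * ((Y1 ω - Y0 ω) - G ω) ^ 2
            + (2 * (f ω * (W ω * (Δ ω - G ω))) + f ω ^ 2 * W ω) := by
      funext ω; simp only [hf_def, hW_def, hΔ_def]; ring
    have hsum : Integrable (fun ω => 2 * (f ω * (W ω * (Δ ω - G ω))) + f ω ^ 2 * W ω) P :=
      (hIcross.const_mul 2).add hIWf2
    have hc2 : Integrable (fun ω => 2 * (f ω * (W ω * (Δ ω - G ω)))) P := hIcross.const_mul 2
    rw [hpt, integral_add hI2 hsum, integral_add hc2 hIWf2, integral_const_mul, hcross, mul_zero,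
      zero_add, hstep3]
  refine ⟨hdecomp, ?_⟩
  rw [hdecomp]
  have hnn : 0 ≤ ∫ ω, (P[fun ω' => wt (X ω') | (MeasurableSpace.comap (fun ω => v (X ω)) inferInstance : MeasurableSpace Ω)]) ω * (G ω - g (v (X ω))) ^ 2 ∂P := by
    refine integral_nonneg_of_ae ?_
    have hcw : (0 : Ω → ℝ) ≤ᵐ[P] P[W | (MeasurableSpace.comap (fun ω => v (X ω)) inferInstance : MeasurableSpace Ω)] :=
      condExp_nonneg (Filter.Eventually.of_forall fun ω => hwtnn _)
    filter_upwards [hcw] with ω h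
    exact mul_nonneg h (sq_nonneg _)
  linarith
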